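/- Let h > 0, C > 0, C₀ > 0, C₁ > 0 and c > 0 be real numbers, and let S ⊆ ℂ be a set such that: (a) every λ ∈ S with |λ| > C satisfies C₀·e^{−h·Re λ} ≤ |λ| ≤ C₁·e^{−h·Re λ}; and (b) for every r ≥ 0 the set S_r := {z ∈ S : |z| ≤ r} is finite, and (card S_r)/r → c as r → ∞. Then there exists m ∈ ℝ such that there is no real number α with the following properties: α = Re λ for some λ ∈ S, α < m, 2α < 0, and sup{Re μ : μ ∈ S, Re μ < α} < 2α. In other words, the spectral gap condition β < 2α < 0 (with β the supremum of real parts of elements of S strictly below α) can hold only for α bounded below. -/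

import Mathlib

/-- The lemma of Section 3.1.2 of the paper: under the strip confinement and
root-counting asymptotics for the characteristic roots, the spectral gap condition
`β < 2α < 0` can hold only for `α` bounded below. -/
theorem spectral_gap_fails (h C C₀ C₁ c : ℝ) (hh : 0 < h) (hC : 0 < C)
    (hC₀ : 0 < C₀) (hC₁ : 0 < C₁) (hc : 0 < c)
    (S : Set ℂ)
    (hstrip : ∀ l ∈ S, C < ‖l‖ →
      C₀ * Real.exp (-h * l.re) ≤ ‖l‖ ∧
      ‖l‖ ≤ C₁ * Real.exp (-h * l.re))
    (hfin : ∀ r : ℝ, 0 ≤ r → {z ∈ S | ‖z‖ ≤ r}.Finite)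
    (hcount : Filter.Tendsto
      (fun r : ℝ => ({z ∈ S | ‖z‖ ≤ r}.ncard : ℝ) / r)
      Filter.atTop (nhds c)) :
    ∃ m : ℝ, ¬ ∃ α : ℝ, (∃ l ∈ S, l.re = α) ∧ α < m ∧ 2 * α < 0 ∧
      sSup (Complex.re '' {μ ∈ S | μ.re < α}) < 2 * α := by
  obtain ⟨R₀, hR₀⟩ := Metric.tendsto_atTop.1 hcount (c / 2) (by positivity)
  set R : ℝ := max R₀ 1 with hRdef
  have hR1 : (1 : ℝ) ≤ R := le_max_right _ _
  have hR0 : (0 : ℝ) < R := lt_of_lt_of_le one_pos hR1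
  -- counting estimates
  have hN : ∀ r : ℝ, R ≤ r →
      c / 2 * r < ({z ∈ S | ‖z‖ ≤ r}.ncard : ℝ) ∧
      ({z ∈ S | ‖z‖ ≤ r}.ncard : ℝ) < 3 * c / 2 * r := by
    intro r hr
    have hrpos : 0 < r := lt_of_lt_of_le hR0 hr
    have hd := hR₀ r (le_trans (le_max_left _ _) hr)
    rw [Real.dist_eq, abs_lt] at hd
    constructor
    · have h1 : c / 2 < ({z ∈ S | ‖z‖ ≤ r}.ncard : ℝ) / r := by linarith [hd.1]
      calc c / 2 * r < ({z ∈ S | ‖z‖ ≤ r}.ncard : ℝ) / r * r := by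
            exact (mul_lt_mul_iff_left₀ hrpos).2 h1
        _ = _ := by field_simp
    · have h2 : ({z ∈ S | ‖z‖ ≤ r}.ncard : ℝ) / r < 3 * c / 2 := by linarith [hd.2]
      calc ({z ∈ S | ‖z‖ ≤ r}.ncard : ℝ)
          = ({z ∈ S | ‖z‖ ≤ r}.ncard : ℝ) / r * r := by field_simp
        _ < 3 * c / 2 * r := (mul_lt_mul_iff_left₀ hrpos).2 h2
  set T : ℝ := 1 + 4 * (C + C₁ + R) / C₀ with hTdef
  have hT1 : (1 : ℝ) ≤ T := by
    have : (0 : ℝ) ≤ 4 * (C + C₁ + R) / C₀ := by positivity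
    rw [hTdef]; linarith
  have hTpos : (0 : ℝ) < T := by linarith
  refine ⟨-Real.log T / h, ?_⟩
  rintro ⟨α, ⟨l, hlS, hlre⟩, hαm, hα0, hgap⟩
  set t : ℝ := Real.exp (-h * α) with htdef
  have ht : T < t := by
    have h1 : h * α < -Real.log T := by
      have := (lt_div_iff₀ hh).1 hαm
      linarith
    have h2 : Real.log T < -h * α := by linarith
    calc T = Real.exp (Real.log T) := (Real.exp_log hTpos).symm
      _ < t := Real.exp_lt_exp.2 h2
  have ht1 : (1 : ℝ) < t := lt_of_le_of_lt hT1 ht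
  have hCT : C₀ * T = C₀ + 4 * (C + C₁ + R) := by
    rw [hTdef]; field_simp
  have hCt : 4 * C₁ < C₀ * t := by
    have : C₀ * T < C₀ * t := (mul_lt_mul_iff_right₀ hC₀).2 ht
    nlinarith
  set r₂ : ℝ := C₀ * (t * t) with hr₂def
  have h2a : 4 * C < r₂ := by nlinarith [(mul_lt_mul_iff_right₀ hC₀).2 ht]
  have h2b : 4 * R < r₂ := by nlinarith [(mul_lt_mul_iff_right₀ hC₀).2 ht]
  have h2c : 4 * (C₁ * t) < r₂ := by nlinarith
  set r₁ : ℝ := max (max C (C₁ * t)) R with hr₁def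
  have hr₁R : R ≤ r₁ := le_max_right _ _
  have hr₁pos : 0 < r₁ := lt_of_lt_of_le hR0 hr₁R
  have h4 : 4 * r₁ ≤ r₂ := by
    have : r₁ ≤ r₂ / 4 := by
      refine max_le (max_le ?_ ?_) ?_ <;>
        · rw [le_div_iff₀ (by norm_num : (0:ℝ) < 4)]; linarith
    linarith
  have hr₂R : R ≤ r₂ := by linarith
  have hr₁r₂ : r₁ < r₂ := by linarith
  -- there is a root in the annulus
  have hlt : ({z ∈ S | ‖z‖ ≤ r₁}.ncard : ℝ) < ({z ∈ S | ‖z‖ ≤ r₂}.ncard : ℝ) := by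
    have hlo := (hN r₂ hr₂R).1
    have hhi := (hN r₁ hr₁R).2
    nlinarith
  have hnsub : ¬ ({z ∈ S | ‖z‖ ≤ r₂} ⊆ {z ∈ S | ‖z‖ ≤ r₁}) := by
    intro hsub
    have := Set.ncard_le_ncard hsub (hfin r₁ (le_of_lt hr₁pos))
    exact absurd (Nat.cast_le.2 this) (not_le.2 hlt)
  obtain ⟨μ, hμB, hμA⟩ := Set.not_subset.1 hnsub
  obtain ⟨hμS, hμr₂⟩ := hμB
  have habs : r₁ < ‖μ‖ := by
    by_contra hcon
    exact hμA ⟨hμS, not_lt.1 hcon⟩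
  have hCμ : C < ‖μ‖ :=
    lt_of_le_of_lt (le_trans (le_max_left _ _) (le_max_left _ _)) habs
  obtain ⟨hlo, hhi⟩ := hstrip μ hμS hCμ
  -- Re μ < α
  have h_lt : μ.re < α := by
    have h1 : C₁ * t < ‖μ‖ :=
      lt_of_le_of_lt (le_trans (le_max_right _ _) (le_max_left _ _)) habs
    have h2 : C₁ * t < C₁ * Real.exp (-h * μ.re) := lt_of_lt_of_le h1 hhi
    have h3 : t < Real.exp (-h * μ.re) := (mul_lt_mul_iff_right₀ hC₁).1 h2
    have h4 : -h * α < -h * μ.re := Real.exp_lt_exp.1 h3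
    have h5 : h * μ.re < h * α := by linarith
    exact (mul_lt_mul_iff_right₀ hh).1 h5
  -- 2α ≤ Re μ
  have h_ge : 2 * α ≤ μ.re := by
    have htt : t * t = Real.exp (-h * (2 * α)) := by
      rw [htdef, ← Real.exp_add]; ring_nf
    have h1 : C₀ * Real.exp (-h * μ.re) ≤ C₀ * Real.exp (-h * (2 * α)) := by
      calc C₀ * Real.exp (-h * μ.re) ≤ ‖μ‖ := hlo
        _ ≤ r₂ := hμr₂
        _ = C₀ * Real.exp (-h * (2 * α)) := by rw [hr₂def, htt]
    have h2 : -h * μ.re ≤ -h * (2 * α) :=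
      Real.exp_le_exp.1 ((mul_le_mul_iff_right₀ hC₀).1 h1)
    have h3 : h * (2 * α) ≤ h * μ.re := by linarith
    exact (mul_le_mul_iff_right₀ hh).1 h3
  -- contradiction with the gap
  have hbdd : BddAbove (Complex.re '' {μ ∈ S | μ.re < α}) := by
    refine ⟨α, ?_⟩
    rintro x ⟨ν, ⟨hνS, hνlt⟩, rfl⟩
    exact le_of_lt hνlt
  have hmem : μ.re ∈ Complex.re '' {μ ∈ S | μ.re < α} := ⟨μ, ⟨hμS, h_lt⟩, rfl⟩
  have := le_csSup hbdd hmem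
  linarith
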